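/- arXiv:math/0511655 — 5 statements merged into one kernel-verified Lean document; each statement's English description precedes it below -/
import Mathlib

section
/- Let G be a group generated by a finite symmetric set S, let d, w ∈ ℕ, and let A be a d×d matrix over ℂ[G] whose entries all have support contained in B_w. Let (F_n) be a Følner exhaustion of G. Then (dim V(F_n) − dim W(F_n))/|F_n| → 0 and (dim Z(F_n) − dim W(F_n))/|F_n| → 0 as n → ∞; in particular, if dim V(F_n)/|F_n| → c ∈ ℝ then also dim Z(F_n)/|F_n| → c and dim W(F_n)/|F_n| → c. -/
open Pointwise Filter Topology

section Defs

variable {G : Type*} [Group G]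

/-- The word ball of radius `k` with respect to the generating set `S`. -/
noncomputable def wball (S : Finset G) (k : ℕ) : Finset G :=
  letI := Classical.decEq G
  (insert (1 : G) S) ^ k

/-- The `k`-neighborhood `B_k(F) = B_k * F` of a finite set `F`. -/
noncomputable def wnbhd (S : Finset G) (k : ℕ) (F : Finset G) : Finset G :=
  letI := Classical.decEq G
  wball S k * F

/-- The `k`-interior `Ω_k(F)` of a finite set `F`. -/
noncomputable def winter (S : Finset G) (k : ℕ) (F : Finset G) : Finset G :=
  letI := Classical.decEq G
  F.filter fun p => wball S k * {p} ⊆ F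

/-- The boundary `∂F` of a finite set `F`. -/
noncomputable def wbdry (S : Finset G) (F : Finset G) : Finset G :=
  letI := Classical.decEq G
  F.filter fun p => ∃ s ∈ S, s * p ∉ F

/-- `S` is a finite symmetric generating set. -/
def IsSymmGen (S : Finset G) : Prop :=
  (∀ s ∈ S, s⁻¹ ∈ S) ∧ Subgroup.closure (S : Set G) = ⊤

/-- A Følner exhaustion of `G`. -/
def IsFolnerExhaustion (S : Finset G) (F : ℕ → Finset G) : Prop :=
  (1 : G) ∈ F 0 ∧ Monotone F ∧ (∀ g : G, ∃ n, g ∈ F n) ∧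
    Filter.Tendsto (fun n => ((wbdry S (F n)).card : ℝ) / ((F n).card : ℝ))
      Filter.atTop (nhds 0)

variable {d : ℕ}

/-- The space of vectors supported in `Fs` such that `A.mulVec f` vanishes on `Fv`. -/
noncomputable def kerOn (A : Matrix (Fin d) (Fin d) (MonoidAlgebra ℂ G))
    (Fs Fv : Finset G) : Submodule ℂ (Fin d → MonoidAlgebra ℂ G) where
  carrier := {f | (∀ i, (f i).coeff.support ⊆ Fs) ∧ ∀ i, ∀ g ∈ Fv, (A.mulVec f i).coeff g = 0}
  zero_mem' := ⟨fun i => by simp, fun i g hg => by simp [Matrix.mulVec_zero]⟩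
  add_mem' := by
    classical
    rintro f g ⟨hf1, hf2⟩ ⟨hg1, hg2⟩
    constructor
    · intro i
      exact Finsupp.support_add.trans (Finset.union_subset (hf1 i) (hg1 i))
    · intro i x hx
      have h : A.mulVec (f + g) = A.mulVec f + A.mulVec g := Matrix.mulVec_add A f g
      rw [h]
      show (A.mulVec f i + A.mulVec g i).coeff x = 0
      rw [MonoidAlgebra.coeff_add, Finsupp.add_apply, hf2 i x hx, hg2 i x hx, add_zero]
  smul_mem' := by
    classical
    rintro c f ⟨hf1, hf2⟩
    constructor
    · intro i
      exact (Finsupp.support_smul).trans (hf1 i)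
    · intro i x hx
      have h : A.mulVec (c • f) = c • A.mulVec f := Matrix.mulVec_smul A c f
      rw [h]
      show (c • A.mulVec f i).coeff x = 0
      rw [MonoidAlgebra.coeff_smul, Finsupp.smul_apply, hf2 i x hx, smul_zero]

/-- The space of vectors supported in `Fs` with `A.mulVec f = 0`. -/
noncomputable def kerAll (A : Matrix (Fin d) (Fin d) (MonoidAlgebra ℂ G))
    (Fs : Finset G) : Submodule ℂ (Fin d → MonoidAlgebra ℂ G) where
  carrier := {f | (∀ i, (f i).coeff.support ⊆ Fs) ∧ A.mulVec f = 0}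
  zero_mem' := ⟨fun i => by simp, Matrix.mulVec_zero A⟩
  add_mem' := by
    classical
    rintro f g ⟨hf1, hf2⟩ ⟨hg1, hg2⟩
    exact ⟨fun i => Finsupp.support_add.trans (Finset.union_subset (hf1 i) (hg1 i)),
      by rw [Matrix.mulVec_add, hf2, hg2, add_zero]⟩
  smul_mem' := by
    classical
    rintro c f ⟨hf1, hf2⟩
    exact ⟨fun i => (Finsupp.support_smul).trans (hf1 i),
      by rw [Matrix.mulVec_smul, hf2, smul_zero]⟩

/-- `V(F)`. -/
noncomputable def VSpace (A : Matrix (Fin d) (Fin d) (MonoidAlgebra ℂ G)) (F : Finset G) :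
    Submodule ℂ (Fin d → MonoidAlgebra ℂ G) :=
  kerOn A F F

/-- `Z(F)`. -/
noncomputable def ZSpace (S : Finset G) (w : ℕ) (A : Matrix (Fin d) (Fin d) (MonoidAlgebra ℂ G))
    (F : Finset G) : Submodule ℂ (Fin d → MonoidAlgebra ℂ G) :=
  kerOn A (wnbhd S w F) F

/-- `W(F)`. -/
noncomputable def WSpace (S : Finset G) (w : ℕ) (A : Matrix (Fin d) (Fin d) (MonoidAlgebra ℂ G))
    (F : Finset G) : Submodule ℂ (Fin d → MonoidAlgebra ℂ G) :=
  kerAll A (winter S w F)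

/-- `A.mulVec` as a `ℂ`-linear map. -/
noncomputable def mulVecL {R : Type*} [Ring R] [Algebra ℂ R] {d : ℕ}
    (A : Matrix (Fin d) (Fin d) R) : (Fin d → R) →ₗ[ℂ] (Fin d → R) where
  toFun := A.mulVec
  map_add' := Matrix.mulVec_add A
  map_smul' c v := Matrix.mulVec_smul A c v

/-- Coordinatewise restriction to `F` (multiplication by the indicator of `F`). -/
noncomputable def restrictTo (d : ℕ) (F : Finset G) :
    (Fin d → MonoidAlgebra ℂ G) →ₗ[ℂ] (Fin d → MonoidAlgebra ℂ G) :=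
  letI := Classical.decEq G
  { toFun := fun f i => MonoidAlgebra.ofCoeff ((f i).coeff.filter (· ∈ F))
    map_add' := fun f g => by
      funext i
      exact congrArg MonoidAlgebra.ofCoeff Finsupp.filter_add
    map_smul' := fun c f => by
      funext i
      exact congrArg MonoidAlgebra.ofCoeff Finsupp.filter_smul }

end Defs

section Tiling

variable {ι α : Type*}

/-- An `ε`-disjoint family of finite sets. -/
def EpsDisjoint (I : Finset ι) (A : ι → Finset α) (ε : ℝ) : Prop :=
  ∃ Ab : ι → Finset α, (∀ i ∈ I, Ab i ⊆ A i) ∧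
    (∀ i ∈ I, ((1 - ε) * (A i).card : ℝ) ≤ ((Ab i).card : ℝ)) ∧
    ∀ i ∈ I, ∀ j ∈ I, i ≠ j → Disjoint (Ab i) (Ab j)

/-- The family `(A i)_{i ∈ I}` `a`-covers `X`. -/
def CoversFrac (I : Finset ι) (A : ι → Finset α) (X : Finset α) (a : ℝ) : Prop :=
  letI := Classical.decEq α
  (a * X.card : ℝ) ≤ ((X ∩ I.biUnion A).card : ℝ)

/-- The family `(A i)_{i ∈ I}` `δ`-evenly covers `X`. -/
def EvenCovering (I : Finset ι) (A : ι → Finset α) (X : Finset α) (δ : ℝ) : Prop :=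
  letI := Classical.decEq α
  ∃ M : ℕ, 1 ≤ M ∧ (∀ p ∈ X, (I.filter fun i => p ∈ A i).card ≤ M) ∧
    ((1 - δ) * M * X.card : ℝ) ≤ ∑ i ∈ I, ((A i).card : ℝ)

/-- The right translate `H·x`. -/
noncomputable def rtrans [Mul α] (H : Finset α) (x : α) : Finset α :=
  letI := Classical.decEq α
  H.image (· * x)

end Tiling

section Supp

variable {G : Type*} [Group G]

/-- Vectors all of whose coordinates are supported in `F`. -/
noncomputable def suppIn (d : ℕ) (F : Finset G) :
    Submodule ℂ (Fin d → MonoidAlgebra ℂ G) where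
  carrier := {f | ∀ i, (f i).coeff.support ⊆ F}
  zero_mem' := fun i => by simp
  add_mem' := by
    classical
    intro f g hf hg i
    exact Finsupp.support_add.trans (Finset.union_subset (hf i) (hg i))
  smul_mem' := fun c f hf i => (Finsupp.support_smul).trans (hf i)

end Supp
section AuxComb

variable {G : Type*} [Group G]

lemma aux_one_mem_wball (S : Finset G) (k : ℕ) : (1 : G) ∈ wball S k := by
  letI := Classical.decEq G
  unfold wball
  exact Finset.one_mem_pow (Finset.mem_insert_self 1 S)

lemma aux_wball_mul {S : Finset G} {k l : ℕ} {a b : G} (ha : a ∈ wball S k)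
    (hb : b ∈ wball S l) : a * b ∈ wball S (k + l) := by
  letI := Classical.decEq G
  unfold wball at *
  rw [pow_add]
  exact Finset.mul_mem_mul ha hb

lemma aux_wball_mono {S : Finset G} {k l : ℕ} (h : k ≤ l) : wball S k ⊆ wball S l := by
  intro a ha
  have := aux_wball_mul ha (aux_one_mem_wball S (l - k))
  rwa [mul_one, Nat.add_sub_cancel' h] at this

lemma aux_wball_inv {S : Finset G} (hS : ∀ s ∈ S, s⁻¹ ∈ S) {k : ℕ} {a : G}
    (ha : a ∈ wball S k) : a⁻¹ ∈ wball S k := by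
  letI := Classical.decEq G
  unfold wball at *
  have hbase : (insert (1 : G) S : Finset G)⁻¹ = insert (1 : G) S := by
    ext x
    simp only [Finset.mem_inv', Finset.mem_insert, inv_eq_one]
    constructor
    · rintro (h | h)
      · exact Or.inl h
      · exact Or.inr (by simpa using hS _ h)
    · rintro (h | h)
      · exact Or.inl h
      · exact Or.inr (hS _ h)
  induction k generalizing a with
  | zero => simp only [pow_zero, Finset.mem_one] at ha ⊢; simp [ha]
  | succ n ih =>
    rw [pow_succ] at ha
    obtain ⟨y, hy, z, hz, rfl⟩ := Finset.mem_mul.mp ha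
    rw [mul_inv_rev, pow_succ']
    exact Finset.mul_mem_mul (hbase ▸ Finset.inv_mem_inv hz) (ih hy)

lemma aux_mem_wball_one {S : Finset G} {t : G}
    (ht : t ∈ (letI := Classical.decEq G; insert (1 : G) S)) :
    t ∈ wball S 1 := by
  letI := Classical.decEq G
  unfold wball
  rw [pow_one]
  exact ht

/-- The escape lemma: a path leaving `F` crosses the boundary. -/
lemma aux_escape {S F : Finset G} (hS : ∀ s ∈ S, s⁻¹ ∈ S) :
    ∀ k (a : G), a ∈ wball S k → ∀ p ∈ F, a * p ∉ F →
      ∃ q ∈ wbdry S F, (∃ b ∈ wball S k, a * p = b * q) ∧ ∃ c ∈ wball S k, p = c * q := by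
  letI := Classical.decEq G
  intro k
  induction k with
  | zero =>
    intro a ha p hp hap
    have : a = 1 := by
      unfold wball at ha
      rw [pow_zero, Finset.mem_one] at ha
      exact ha
    subst this
    simp only [one_mul] at hap
    exact absurd hp hap
  | succ n ih =>
    intro a ha p hp hap
    have ha' : a ∈ (insert (1 : G) S) * (insert (1 : G) S : Finset G) ^ n := by
      unfold wball at ha
      rwa [pow_succ'] at ha
    obtain ⟨t, ht, b, hb, rfl⟩ := Finset.mem_mul.mp ha'
    have hb' : b ∈ wball S n := hb
    by_cases hbp : b * p ∈ F
    · rcases Finset.mem_insert.mp ht with rfl | htS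
      · exact absurd (by simpa using hbp) hap
      · refine ⟨b * p, ?_, ⟨t, ?_, by rw [mul_assoc]⟩,
          ⟨b⁻¹, aux_wball_mono (Nat.le_succ n) (aux_wball_inv hS hb'), by group⟩⟩
        · unfold wbdry
          rw [Finset.mem_filter]
          exact ⟨hbp, t, htS, by rwa [← mul_assoc]⟩
        · exact aux_wball_mono (by omega) (aux_mem_wball_one (Finset.mem_insert_of_mem htS))
    · obtain ⟨q, hq, ⟨b', hb'', hbq⟩, c, hc, hcq⟩ := ih b hb' p hp hbp
      refine ⟨q, hq, ⟨t * b', ?_, by rw [mul_assoc, hbq, mul_assoc]⟩,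
        c, aux_wball_mono (Nat.le_succ n) hc, hcq⟩
      have := aux_wball_mul (aux_mem_wball_one ht) hb''
      simpa [Nat.add_comm] using this

lemma aux_interior_diff {S : Finset G} (hS : ∀ s ∈ S, s⁻¹ ∈ S) (k : ℕ) (F : Finset G) :
    ∀ p ∈ F, p ∉ winter S k F →
      p ∈ (letI := Classical.decEq G; wball S k * wbdry S F) := by
  letI := Classical.decEq G
  intro p hp hpn
  have : ¬ (wball S k * {p} ⊆ F) := by
    unfold winter at hpn
    intro hcon
    exact hpn (Finset.mem_filter.mpr ⟨hp, hcon⟩)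
  obtain ⟨x, hx, hxF⟩ := Finset.not_subset.mp this
  obtain ⟨a, haB, z, hz, rfl⟩ := Finset.mem_mul.mp hx
  rw [Finset.mem_singleton] at hz
  rw [hz] at hxF
  obtain ⟨q, hq, _, c, hc, hcq⟩ := aux_escape hS k a haB p hp hxF
  rw [hcq]
  exact Finset.mul_mem_mul hc hq

lemma aux_nbhd_diff {S : Finset G} (hS : ∀ s ∈ S, s⁻¹ ∈ S) (k : ℕ) (F : Finset G) :
    ∀ x ∈ wnbhd S k F, x ∉ F →
      x ∈ (letI := Classical.decEq G; wball S k * wbdry S F) := by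
  letI := Classical.decEq G
  intro x hx hxF
  have hx' : x ∈ wball S k * F := hx
  obtain ⟨a, haB, p, hp, rfl⟩ := Finset.mem_mul.mp hx'
  obtain ⟨q, hq, ⟨b, hb, hbq⟩, _⟩ := aux_escape hS k a haB p hp hxF
  rw [hbq]
  exact Finset.mul_mem_mul hb hq

lemma aux_winter_subset (S : Finset G) (k : ℕ) (F : Finset G) : winter S k F ⊆ F := by
  letI := Classical.decEq G
  unfold winter; exact Finset.filter_subset _ _

lemma aux_winter_anti {S : Finset G} {k l : ℕ} (h : k ≤ l) (F : Finset G) :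
    winter S l F ⊆ winter S k F := by
  letI := Classical.decEq G
  intro p hp
  unfold winter at *
  rw [Finset.mem_filter] at *
  refine ⟨hp.1, ?_⟩
  intro x hx
  apply hp.2
  obtain ⟨a, ha, z, hz, rfl⟩ := Finset.mem_mul.mp hx
  exact Finset.mul_mem_mul (aux_wball_mono h ha) hz

lemma aux_subset_wnbhd (S : Finset G) (k : ℕ) (F : Finset G) : F ⊆ wnbhd S k F := by
  letI := Classical.decEq G
  intro x hx
  unfold wnbhd
  have : (1 : G) * x ∈ wball S k * F := Finset.mul_mem_mul (aux_one_mem_wball S k) hx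
  simpa using this

lemma aux_wball_mul_winter (S : Finset G) (w : ℕ) (F : Finset G) {a p : G}
    (ha : a ∈ wball S w) (hp : p ∈ winter S (2 * w) F) : a * p ∈ F := by
  letI := Classical.decEq G
  unfold winter at hp
  rw [Finset.mem_filter] at hp
  apply hp.2
  exact Finset.mul_mem_mul (aux_wball_mono (by omega) ha) (Finset.mem_singleton_self p)

end AuxComb
section AuxAlg

variable {G : Type*} [Group G]

lemma aux_suppIn_fd (d : ℕ) (F : Finset G) :
    FiniteDimensional ℂ (suppIn (G := G) d F) := by
  classical
  let φ : (suppIn (G := G) d F) →ₗ[ℂ] (Fin d → (F → ℂ)) :=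
    { toFun := fun f i x => ((f : Fin d → MonoidAlgebra ℂ G) i).coeff x
      map_add' := fun f g => by
        funext i x
        rfl
      map_smul' := fun c f => by
        funext i x
        rfl }
  have hinj : Function.Injective φ := by
    rw [injective_iff_map_eq_zero]
    intro f hf
    ext i g
    by_cases hg : g ∈ F
    · have := congrFun (congrFun hf i) ⟨g, hg⟩
      simpa [φ] using this
    · have hsupp := f.2 i
      by_contra hne
      exact hg (hsupp (Finsupp.mem_support_iff.mpr hne))
  exact FiniteDimensional.of_injective φ hinj

lemma aux_kerOn_fd {d : ℕ} (A : Matrix (Fin d) (Fin d) (MonoidAlgebra ℂ G))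
    (Fs Fv : Finset G) : FiniteDimensional ℂ (kerOn A Fs Fv) := by
  haveI := aux_suppIn_fd (G := G) d Fs
  exact Submodule.finiteDimensional_of_le (S₂ := suppIn d Fs) (fun f hf => hf.1)

lemma aux_kerAll_fd {d : ℕ} (A : Matrix (Fin d) (Fin d) (MonoidAlgebra ℂ G))
    (Fs : Finset G) : FiniteDimensional ℂ (kerAll A Fs) := by
  haveI := aux_suppIn_fd (G := G) d Fs
  exact Submodule.finiteDimensional_of_le (S₂ := suppIn d Fs) (fun f hf => hf.1)

lemma aux_W_le_V {S : Finset G} {w d : ℕ} (A : Matrix (Fin d) (Fin d) (MonoidAlgebra ℂ G))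
    (F : Finset G) : WSpace S w A F ≤ VSpace A F := by
  rintro f ⟨hf1, hf2⟩
  refine ⟨fun i => (hf1 i).trans (aux_winter_subset S w F), fun i g _ => ?_⟩
  rw [hf2]
  simp

lemma aux_V_le_Z {S : Finset G} {w d : ℕ} (A : Matrix (Fin d) (Fin d) (MonoidAlgebra ℂ G))
    (F : Finset G) : VSpace A F ≤ ZSpace S w A F := by
  rintro f ⟨hf1, hf2⟩
  exact ⟨fun i => (hf1 i).trans (aux_subset_wnbhd S w F), hf2⟩

lemma aux_dim_bound [DecidableEq G] {S : Finset G} (w d : ℕ)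
    (A : Matrix (Fin d) (Fin d) (MonoidAlgebra ℂ G))
    (hA : ∀ i j, (A i j).coeff.support ⊆ wball S w) (F : Finset G) :
    Module.finrank ℂ (ZSpace S w A F) ≤ Module.finrank ℂ (WSpace S w A F)
      + d * (wnbhd S w F \ winter S (2 * w) F).card := by
  haveI : FiniteDimensional ℂ (ZSpace S w A F) := aux_kerOn_fd A _ _
  haveI : FiniteDimensional ℂ (WSpace S w A F) := aux_kerAll_fd A _
  set T : Finset G := wnbhd S w F \ winter S (2 * w) F with hT
  let π : (ZSpace S w A F) →ₗ[ℂ] ((Fin d × T) → ℂ) :=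
    { toFun := fun f p => ((f : Fin d → MonoidAlgebra ℂ G) p.1).coeff p.2.1
      map_add' := fun f g => by funext p; rfl
      map_smul' := fun c f => by funext p; rfl }
  -- kernel of π maps into W
  have hker : ∀ f : LinearMap.ker π, ((f : ZSpace S w A F) : Fin d → MonoidAlgebra ℂ G)
      ∈ WSpace S w A F := by
    rintro ⟨⟨f, hf1, hf2⟩, hfk⟩
    rw [LinearMap.mem_ker] at hfk
    have hzero : ∀ (i : Fin d), ∀ x ∈ T, (f i).coeff x = 0 := by
      intro i x hx
      have := congrFun hfk (i, (⟨x, hx⟩ : { y // y ∈ T }))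
      simpa [π] using this
    have hsupp : ∀ i, (f i).coeff.support ⊆ winter S (2 * w) F := by
      intro i g hg
      by_contra hgn
      have hgT : g ∈ T := Finset.mem_sdiff.mpr ⟨hf1 i hg, hgn⟩
      exact Finsupp.mem_support_iff.mp hg (hzero i g hgT)
    have hmv : ∀ i, (A.mulVec f i).coeff.support ⊆ F := by
      intro i
      have heq : A.mulVec f i = ∑ j, A i j * f j := rfl
      rw [heq]
      rw [MonoidAlgebra.coeff_sum]
      refine Finsupp.support_finset_sum.trans ?_
      intro g hg
      rw [Finset.mem_biUnion] at hg
      obtain ⟨j, _, hgj⟩ := hg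
      have := MonoidAlgebra.support_coeff_mul_subset (A i j) (f j) hgj
      obtain ⟨a, haA, b, hbB, rfl⟩ := Finset.mem_mul.mp this
      exact aux_wball_mul_winter S w F (hA i j haA) (hsupp j hbB)
    refine ⟨fun i => (hsupp i).trans (aux_winter_anti (by omega) F), ?_⟩
    funext i
    ext g
    by_cases hg : g ∈ F
    · simpa using hf2 i g hg
    · simp only [Pi.zero_apply, MonoidAlgebra.coeff_zero, Finsupp.coe_zero]
      by_contra hne
      exact hg (hmv i (Finsupp.mem_support_iff.mpr hne))
  let ι : (LinearMap.ker π) →ₗ[ℂ] (WSpace S w A F) :=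
    LinearMap.codRestrict _ (((ZSpace S w A F).subtype).comp (LinearMap.ker π).subtype) hker
  have hιinj : Function.Injective ι := by
    intro f g hfg
    have h : ((ZSpace S w A F).subtype.comp (LinearMap.ker π).subtype) f
        = ((ZSpace S w A F).subtype.comp (LinearMap.ker π).subtype) g := by
      rw [← LinearMap.codRestrict_apply (p := WSpace S w A F) (h := hker),
        ← LinearMap.codRestrict_apply (p := WSpace S w A F) (h := hker), hfg]
    simp only [LinearMap.comp_apply, Submodule.coe_subtype] at h
    exact Subtype.ext (Subtype.ext h)
  have h1 : Module.finrank ℂ (LinearMap.ker π) ≤ Module.finrank ℂ (WSpace S w A F) :=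
    LinearMap.finrank_le_finrank_of_injective hιinj
  have h2 : Module.finrank ℂ (LinearMap.range π) ≤ d * T.card := by
    have := Submodule.finrank_le (LinearMap.range π)
    rwa [Module.finrank_pi, Fintype.card_prod, Fintype.card_fin, Fintype.card_coe] at this
  have h3 := LinearMap.finrank_range_add_finrank_ker π
  omega

end AuxAlg
theorem VZW_dim_asymptotics {G : Type*} [Group G] (S : Finset G) (hS : IsSymmGen S)
    (F : ℕ → Finset G) (hF : IsFolnerExhaustion S F)
    (d w : ℕ) (A : Matrix (Fin d) (Fin d) (MonoidAlgebra ℂ G))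
    (hA : ∀ i j, (A i j).coeff.support ⊆ wball S w) :
    Tendsto (fun n => ((Module.finrank ℂ (VSpace A (F n)) : ℝ)
        - (Module.finrank ℂ (WSpace S w A (F n)) : ℝ)) / ((F n).card : ℝ)) atTop (𝓝 0) ∧
    Tendsto (fun n => ((Module.finrank ℂ (ZSpace S w A (F n)) : ℝ)
        - (Module.finrank ℂ (WSpace S w A (F n)) : ℝ)) / ((F n).card : ℝ)) atTop (𝓝 0) ∧
    ∀ c : ℝ,
      Tendsto (fun n => (Module.finrank ℂ (VSpace A (F n)) : ℝ) / ((F n).card : ℝ)) atTop (𝓝 c) →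
      Tendsto (fun n => (Module.finrank ℂ (ZSpace S w A (F n)) : ℝ) / ((F n).card : ℝ)) atTop (𝓝 c) ∧
      Tendsto (fun n => (Module.finrank ℂ (WSpace S w A (F n)) : ℝ) / ((F n).card : ℝ)) atTop (𝓝 c) := by
  letI := Classical.decEq G
  obtain ⟨hSsym, -⟩ := hS
  obtain ⟨h1F, hmono, -, hfol⟩ := hF
  have hpos : ∀ n, 0 < ((F n).card : ℝ) := by
    intro n
    have h1 : (1 : G) ∈ F n := hmono (Nat.zero_le n) h1F
    exact_mod_cast Finset.card_pos.mpr ⟨1, h1⟩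
  set K : ℕ := (wball S (2 * w)).card with hK
  have hsub : ∀ n, wnbhd S w (F n) \ winter S (2 * w) (F n)
      ⊆ wball S (2 * w) * wbdry S (F n) := by
    intro n x hx
    rw [Finset.mem_sdiff] at hx
    by_cases hxF : x ∈ F n
    · exact aux_interior_diff hSsym (2 * w) (F n) x hxF hx.2
    · have hmem := aux_nbhd_diff hSsym w (F n) x hx.1 hxF
      obtain ⟨a, ha, q, hq, rfl⟩ := Finset.mem_mul.mp hmem
      exact Finset.mul_mem_mul (aux_wball_mono (by omega) ha) hq
  have hcard : ∀ n, (wnbhd S w (F n) \ winter S (2 * w) (F n)).card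
      ≤ K * (wbdry S (F n)).card :=
    fun n => (Finset.card_le_card (hsub n)).trans Finset.card_mul_le
  have hZbound : ∀ n, Module.finrank ℂ (ZSpace S w A (F n))
      ≤ Module.finrank ℂ (WSpace S w A (F n)) + d * K * (wbdry S (F n)).card := by
    intro n
    have h1 := aux_dim_bound w d A hA (F n)
    have h2 := Nat.mul_le_mul_left d (hcard n)
    have h3 : d * (K * (wbdry S (F n)).card) = d * K * (wbdry S (F n)).card :=
      (mul_assoc _ _ _).symm
    omega
  have hWV : ∀ n, Module.finrank ℂ (WSpace S w A (F n))
      ≤ Module.finrank ℂ (VSpace A (F n)) := by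
    intro n
    haveI : FiniteDimensional ℂ (VSpace A (F n)) := aux_kerOn_fd A _ _
    exact LinearMap.finrank_le_finrank_of_injective
      (Submodule.inclusion_injective (aux_W_le_V A (F n)))
  have hVZ : ∀ n, Module.finrank ℂ (VSpace A (F n))
      ≤ Module.finrank ℂ (ZSpace S w A (F n)) := by
    intro n
    haveI : FiniteDimensional ℂ (ZSpace S w A (F n)) := aux_kerOn_fd A _ _
    exact LinearMap.finrank_le_finrank_of_injective
      (Submodule.inclusion_injective (aux_V_le_Z A (F n)))
  set C : ℝ := (d : ℝ) * (K : ℝ) with hC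
  set bnd : ℕ → ℝ := fun n => C * (((wbdry S (F n)).card : ℝ) / ((F n).card : ℝ)) with hbnd
  have hbnd0 : Tendsto bnd atTop (𝓝 0) := by
    rw [hbnd]
    simpa using hfol.const_mul C
  have hZreal : ∀ n, ((Module.finrank ℂ (ZSpace S w A (F n)) : ℝ)
      - (Module.finrank ℂ (WSpace S w A (F n)) : ℝ)) / ((F n).card : ℝ) ≤ bnd n := by
    intro n
    have h : ((Module.finrank ℂ (ZSpace S w A (F n)) : ℝ)
        - (Module.finrank ℂ (WSpace S w A (F n)) : ℝ))
        ≤ C * ((wbdry S (F n)).card : ℝ) := by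
      have h0 := hZbound n
      have h1 : ((Module.finrank ℂ (ZSpace S w A (F n)) : ℝ))
          ≤ (Module.finrank ℂ (WSpace S w A (F n)) : ℝ)
            + ((d : ℝ) * (K : ℝ)) * ((wbdry S (F n)).card : ℝ) := by
        exact_mod_cast h0
      rw [hC]
      linarith
    show _ ≤ C * (((wbdry S (F n)).card : ℝ) / ((F n).card : ℝ))
    rw [← mul_div_assoc]
    gcongr
  have hWVr : ∀ n, (0 : ℝ) ≤ ((Module.finrank ℂ (VSpace A (F n)) : ℝ)
      - (Module.finrank ℂ (WSpace S w A (F n)) : ℝ)) / ((F n).card : ℝ) := by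
    intro n
    apply div_nonneg _ (hpos n).le
    have := hWV n
    have : ((Module.finrank ℂ (WSpace S w A (F n)) : ℝ))
        ≤ (Module.finrank ℂ (VSpace A (F n)) : ℝ) := by exact_mod_cast this
    linarith
  have hZWr : ∀ n, (0 : ℝ) ≤ ((Module.finrank ℂ (ZSpace S w A (F n)) : ℝ)
      - (Module.finrank ℂ (WSpace S w A (F n)) : ℝ)) / ((F n).card : ℝ) := by
    intro n
    apply div_nonneg _ (hpos n).le
    have := (hWV n).trans (hVZ n)
    have : ((Module.finrank ℂ (WSpace S w A (F n)) : ℝ))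
        ≤ (Module.finrank ℂ (ZSpace S w A (F n)) : ℝ) := by exact_mod_cast this
    linarith
  have hVle : ∀ n, ((Module.finrank ℂ (VSpace A (F n)) : ℝ)
      - (Module.finrank ℂ (WSpace S w A (F n)) : ℝ)) / ((F n).card : ℝ) ≤ bnd n := by
    intro n
    refine le_trans ?_ (hZreal n)
    have := hVZ n
    have hvz : ((Module.finrank ℂ (VSpace A (F n)) : ℝ))
        ≤ (Module.finrank ℂ (ZSpace S w A (F n)) : ℝ) := by exact_mod_cast this
    gcongr
  have part1 : Tendsto (fun n => ((Module.finrank ℂ (VSpace A (F n)) : ℝ)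
      - (Module.finrank ℂ (WSpace S w A (F n)) : ℝ)) / ((F n).card : ℝ)) atTop (𝓝 0) :=
    tendsto_of_tendsto_of_tendsto_of_le_of_le tendsto_const_nhds hbnd0 hWVr hVle
  have part2 : Tendsto (fun n => ((Module.finrank ℂ (ZSpace S w A (F n)) : ℝ)
      - (Module.finrank ℂ (WSpace S w A (F n)) : ℝ)) / ((F n).card : ℝ)) atTop (𝓝 0) :=
    tendsto_of_tendsto_of_tendsto_of_le_of_le tendsto_const_nhds hbnd0 hZWr hZreal
  refine ⟨part1, part2, ?_⟩
  intro c hV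
  have hW : Tendsto (fun n => (Module.finrank ℂ (WSpace S w A (F n)) : ℝ)
      / ((F n).card : ℝ)) atTop (𝓝 c) := by
    have h := hV.sub part1
    rw [sub_zero] at h
    have heq : (fun n => (Module.finrank ℂ (VSpace A (F n)) : ℝ) / ((F n).card : ℝ)
        - ((Module.finrank ℂ (VSpace A (F n)) : ℝ)
          - (Module.finrank ℂ (WSpace S w A (F n)) : ℝ)) / ((F n).card : ℝ))
        = fun n => (Module.finrank ℂ (WSpace S w A (F n)) : ℝ) / ((F n).card : ℝ) := by
      funext n
      rw [sub_div]
      ring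
    rwa [heq] at h
  refine ⟨?_, hW⟩
  have h := part2.add hW
  rw [zero_add] at h
  have heq : (fun n => ((Module.finrank ℂ (ZSpace S w A (F n)) : ℝ)
      - (Module.finrank ℂ (WSpace S w A (F n)) : ℝ)) / ((F n).card : ℝ)
      + (Module.finrank ℂ (WSpace S w A (F n)) : ℝ) / ((F n).card : ℝ))
      = fun n => (Module.finrank ℂ (ZSpace S w A (F n)) : ℝ) / ((F n).card : ℝ) := by
    funext n
    rw [sub_div]
    ring
  rwa [heq] at h
end

section
/- Let G be a group generated by a finite symmetric set S, let d, w ∈ ℕ, and let A be a d×d matrix over ℂ[G] whose entries all have support contained in B_w. For every finite F ⊆ G: W(F) equals both V(F) ∩ {f | every coordinate of f is supported in Ω_w(F)} and Z(F) ∩ {f | every coordinate of f is supported in Ω_w(F)}; consequently dim V(F) ≤ dim W(F) + d·(|F| − |Ω_w(F)|) and dim Z(F) ≤ dim W(F) + d·(|B_w(F)| − |Ω_w(F)|). -/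
open Pointwise Filter Topology

section Aux

variable {G : Type*} [Group G]

lemma winter_subset (S : Finset G) (w : ℕ) (F : Finset G) : winter S w F ⊆ F := by
  intro x hx
  unfold winter at hx
  simp only [Finset.mem_filter] at hx
  exact hx.1

lemma one_mem_wball (S : Finset G) (w : ℕ) : (1 : G) ∈ wball S w := by
  classical
  unfold wball
  exact Finset.one_mem_pow (Finset.mem_insert_self 1 S)

lemma subset_wnbhd (S : Finset G) (w : ℕ) (F : Finset G) : F ⊆ wnbhd S w F := by
  classical
  intro g hg
  unfold wnbhd
  have : (1 : G) * g ∈ wball S w * F := Finset.mul_mem_mul (one_mem_wball S w) hg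
  simpa using this

lemma wball_mul_winter {S : Finset G} {w : ℕ} {F : Finset G} {s p : G}
    (hs : s ∈ wball S w) (hp : p ∈ winter S w F) : s * p ∈ F := by
  classical
  unfold winter at hp
  simp only [Finset.mem_filter] at hp
  exact hp.2 (Finset.mul_mem_mul hs (Finset.mem_singleton_self p))

lemma key_vanish {d : ℕ} (S : Finset G) (w : ℕ)
    (A : Matrix (Fin d) (Fin d) (MonoidAlgebra ℂ G))
    (hA : ∀ i j, (A i j).coeff.support ⊆ wball S w) (F : Finset G)
    (f : Fin d → MonoidAlgebra ℂ G)
    (hsupp : ∀ i, (f i).coeff.support ⊆ winter S w F)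
    (hker : ∀ i, ∀ g ∈ F, (A.mulVec f i).coeff g = 0) :
    A.mulVec f = 0 := by
  classical
  funext i
  have hsub : (A.mulVec f i).coeff.support ⊆ F := by
    have hEq : A.mulVec f i = ∑ j, A i j * f j := by
      simp [Matrix.mulVec, dotProduct]
    rw [hEq, MonoidAlgebra.coeff_sum]
    refine Finsupp.support_finset_sum.trans ?_
    intro x hx
    obtain ⟨j, -, hj⟩ := Finset.mem_biUnion.1 hx
    have hj' := MonoidAlgebra.support_coeff_mul_subset (A i j) (f j) hj
    obtain ⟨a, ha, b, hb, rfl⟩ := Finset.mem_mul.1 hj'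
    exact wball_mul_winter (hA i j ha) (hsupp j hb)
  ext g
  by_cases hg : g ∈ F
  · simpa using hker i g hg
  · show (A.mulVec f i).coeff g = 0
    by_contra h
    exact hg (hsub (Finsupp.mem_support_iff.2 h))

set_option synthInstance.maxHeartbeats 1000000 in
set_option maxHeartbeats 1000000 in
lemma dim_aux {d : ℕ} (P : Submodule ℂ (Fin d → MonoidAlgebra ℂ G))
    (T Om : Finset G) (hOT : Om ⊆ T)
    (hP : ∀ f ∈ P, ∀ i, (f i).coeff.support ⊆ T) :
    Module.finrank ℂ P ≤ Module.finrank ℂ ↥(P ⊓ suppIn d Om) + d * (T.card - Om.card) := by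
  classical
  by_cases hfd : FiniteDimensional ℂ P
  · let φ : P →ₗ[ℂ] ((Fin d × ↥(T \ Om)) → ℂ) :=
      { toFun := fun f ip => ((f : Fin d → MonoidAlgebra ℂ G) ip.1).coeff (ip.2 : G)
        map_add' := fun f g => by funext ip; rfl
        map_smul' := fun c f => by funext ip; rfl }
    have hker : LinearMap.ker φ = Submodule.comap P.subtype (P ⊓ suppIn d Om) := by
      ext f
      simp only [LinearMap.mem_ker, Submodule.mem_comap, Submodule.mem_inf,
        Submodule.coe_subtype]
      constructor
      · intro h
        refine ⟨f.2, fun i x hx => ?_⟩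
        have hxT : x ∈ T := hP f.1 f.2 i hx
        by_contra hxO
        have h0 : φ f (i, ⟨x, Finset.mem_sdiff.2 ⟨hxT, hxO⟩⟩) = 0 := by rw [h]; rfl
        exact Finsupp.mem_support_iff.1 hx h0
      · rintro ⟨-, h⟩
        funext ip
        obtain ⟨i, p⟩ := ip
        have hp := Finset.mem_sdiff.1 p.2
        show ((f : Fin d → MonoidAlgebra ℂ G) i).coeff (p : G) = 0
        by_contra hne
        exact hp.2 (h i (Finsupp.mem_support_iff.2 hne))
    have efin : Module.finrank ℂ ↥(LinearMap.ker φ) =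
        Module.finrank ℂ ↥(P ⊓ suppIn d Om) := by
      rw [hker]
      exact LinearEquiv.finrank_eq (Submodule.comapSubtypeEquivOfLe inf_le_left)
    have hrank := (LinearMap.finrank_range_add_finrank_ker φ).symm
    have hrange : Module.finrank ℂ ↥(LinearMap.range φ) ≤ d * (T.card - Om.card) := by
      refine (Submodule.finrank_le _).trans_eq ?_
      rw [Module.finrank_fintype_fun_eq_card, Fintype.card_prod, Fintype.card_fin,
        Fintype.card_coe, Finset.card_sdiff_of_subset hOT]
    omega
  · rw [Module.finrank_of_infinite_dimensional hfd]
    exact Nat.zero_le _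

end Aux

theorem W_eq_V_inter_and_dim_bounds {G : Type*} [Group G] (S : Finset G) (hS : IsSymmGen S)
    (d w : ℕ) (A : Matrix (Fin d) (Fin d) (MonoidAlgebra ℂ G))
    (hA : ∀ i j, (A i j).coeff.support ⊆ wball S w) (F : Finset G) :
    WSpace S w A F = VSpace A F ⊓ suppIn d (winter S w F) ∧
    WSpace S w A F = ZSpace S w A F ⊓ suppIn d (winter S w F) ∧
    Module.finrank ℂ (VSpace A F) ≤
      Module.finrank ℂ (WSpace S w A F) + d * (F.card - (winter S w F).card) ∧
    Module.finrank ℂ (ZSpace S w A F) ≤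
      Module.finrank ℂ (WSpace S w A F) + d * ((wnbhd S w F).card - (winter S w F).card) := by
  classical
  have hmemW : ∀ f, f ∈ WSpace S w A F ↔
      (∀ i, (f i).coeff.support ⊆ winter S w F) ∧ A.mulVec f = 0 := fun f => Iff.rfl
  have hmemV : ∀ f, f ∈ VSpace A F ↔
      (∀ i, (f i).coeff.support ⊆ F) ∧ ∀ i, ∀ g ∈ F, (A.mulVec f i).coeff g = 0 := fun f => Iff.rfl
  have hmemZ : ∀ f, f ∈ ZSpace S w A F ↔
      (∀ i, (f i).coeff.support ⊆ wnbhd S w F) ∧ ∀ i, ∀ g ∈ F, (A.mulVec f i).coeff g = 0 := fun f => Iff.rfl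
  have hmemS : ∀ f, f ∈ suppIn d (winter S w F) ↔
      (∀ i, (f i).coeff.support ⊆ winter S w F) := fun f => Iff.rfl
  have hV : WSpace S w A F = VSpace A F ⊓ suppIn d (winter S w F) := by
    ext f
    rw [Submodule.mem_inf, hmemW, hmemV, hmemS]
    constructor
    · rintro ⟨h1, h2⟩
      exact ⟨⟨fun i => (h1 i).trans (winter_subset S w F),
        fun i g _ => by rw [h2]; rfl⟩, h1⟩
    · rintro ⟨⟨-, h2⟩, h1⟩
      exact ⟨h1, key_vanish S w A hA F f h1 h2⟩
  have hZ : WSpace S w A F = ZSpace S w A F ⊓ suppIn d (winter S w F) := by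
    ext f
    rw [Submodule.mem_inf, hmemW, hmemZ, hmemS]
    constructor
    · rintro ⟨h1, h2⟩
      exact ⟨⟨fun i => ((h1 i).trans (winter_subset S w F)).trans (subset_wnbhd S w F),
        fun i g _ => by rw [h2]; rfl⟩, h1⟩
    · rintro ⟨⟨-, h2⟩, h1⟩
      exact ⟨h1, key_vanish S w A hA F f h1 h2⟩
  refine ⟨hV, hZ, ?_, ?_⟩
  · have := dim_aux (VSpace A F) F (winter S w F) (winter_subset S w F)
      (fun f hf i => ((hmemV f).1 hf).1 i)
    rwa [← hV] at this
  · have := dim_aux (ZSpace S w A F) (wnbhd S w F) (winter S w F)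
      ((winter_subset S w F).trans (subset_wnbhd S w F))
      (fun f hf i => ((hmemZ f).1 hf).1 i)
    rwa [← hZ] at this
end

section
/- (Ornstein–Weiss even-covering lemma.) Let X be a nonempty finite set, let (H_j)_{j∈J} be a finite family of finite subsets of X forming a δ-even covering of X (0 ≤ δ < 1), and let 0 < ε < 1. Then there exists a subset I ⊆ J such that the subfamily (H_j)_{j∈I} is ε-disjoint and ε(1−δ)-covers X. -/
open Pointwise Filter Topology

theorem ornstein_weiss_covering {ι α : Type*} (X : Finset α) (hX : X.Nonempty)
    (J : Finset ι) (H : ι → Finset α) (hsub : ∀ j ∈ J, H j ⊆ X)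
    (δ ε : ℝ) (hδ0 : 0 ≤ δ) (hδ1 : δ < 1) (hε0 : 0 < ε) (hε1 : ε < 1)
    (hec : EvenCovering J H X δ) :
    ∃ I ⊆ J, EpsDisjoint I H ε ∧ CoversFrac I H X (ε * (1 - δ)) := by
  classical
  obtain ⟨M, hM1, hMbound, hMsum⟩ := hec
  have hMpos : (0:ℝ) < M := by exact_mod_cast hM1
  -- maximal ε-disjoint subfamily
  set P : Finset (Finset ι) := J.powerset.filter (fun I => EpsDisjoint I H ε) with hP
  have hPne : (∅ : Finset ι) ∈ P := by
    refine Finset.mem_filter.mpr ⟨Finset.empty_mem_powerset J, ?_⟩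
    exact ⟨H, by simp, by simp, by simp⟩
  obtain ⟨I, hIP, hImax⟩ := P.exists_max_image Finset.card ⟨∅, hPne⟩
  obtain ⟨hIJ', hIdisj⟩ := Finset.mem_filter.mp hIP
  have hIJ : I ⊆ J := Finset.mem_powerset.mp hIJ'
  obtain ⟨Ab, hAbsub, hAbcard, hAbdisj⟩ := hIdisj
  set Y : Finset α := I.biUnion H with hY
  have hYX : Y ⊆ X := by
    intro y hy
    obtain ⟨j, hj, hyj⟩ := Finset.mem_biUnion.mp hy
    exact hsub j (hIJ hj) hyj
  -- key claim
  have key : ∀ j ∈ J, (ε * (H j).card : ℝ) ≤ ((H j ∩ Y).card : ℝ) := by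
    intro j hj
    by_cases hjI : j ∈ I
    · have hsubY : H j ⊆ Y := fun x hx => Finset.mem_biUnion.mpr ⟨j, hjI, hx⟩
      rw [Finset.inter_eq_left.mpr hsubY]
      have h0 : (0:ℝ) ≤ ((H j).card : ℝ) := Nat.cast_nonneg _
      nlinarith
    · by_contra hcon
      push_neg at hcon
      have hcard : ((H j ∩ Y).card : ℝ) + ((H j \ Y).card : ℝ) = (H j).card := by
        exact_mod_cast congrArg (Nat.cast : ℕ → ℝ) (Finset.card_inter_add_card_sdiff (H j) Y)
      have hbig : ((1 - ε) * (H j).card : ℝ) ≤ ((H j \ Y).card : ℝ) := by nlinarith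
      -- extend the family
      set Ab' : ι → Finset α := fun i => if i = j then H j \ Y else Ab i with hAb'
      have hnew : EpsDisjoint (insert j I) H ε := by
        refine ⟨Ab', ?_, ?_, ?_⟩
        · intro i hi
          rcases Finset.mem_insert.mp hi with rfl | hi
          · simp [hAb', Finset.sdiff_subset]
          · have : i ≠ j := fun h => hjI (h ▸ hi)
            simp only [hAb', if_neg this]
            exact hAbsub i hi
        · intro i hi
          rcases Finset.mem_insert.mp hi with rfl | hi
          · simpa [hAb'] using hbig
          · have : i ≠ j := fun h => hjI (h ▸ hi)
            simp only [hAb', if_neg this]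
            exact hAbcard i hi
        · intro i hi k hk hik
          have hsubY' : ∀ m ∈ I, Ab' m ⊆ Y := by
            intro m hm
            have : m ≠ j := fun h => hjI (h ▸ hm)
            simp only [hAb', if_neg this]
            exact (hAbsub m hm).trans (fun x hx => Finset.mem_biUnion.mpr ⟨m, hm, hx⟩)
          by_cases hij : i = j
          · subst hij
            have hkI : k ∈ I := (Finset.mem_insert.mp hk).resolve_left fun h => hik h.symm
            have hieq : Ab' i = H i \ Y := by simp [hAb']
            rw [hieq]
            exact Finset.disjoint_left.mpr fun x hx hx' =>
              (Finset.mem_sdiff.mp hx).2 (hsubY' k hkI hx')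
          · have hiI : i ∈ I := (Finset.mem_insert.mp hi).resolve_left hij
            by_cases hkj : k = j
            · subst hkj
              have hkeq : Ab' k = H k \ Y := by simp [hAb']
              rw [hkeq]
              exact Finset.disjoint_right.mpr fun x hx hx' =>
                (Finset.mem_sdiff.mp hx).2 (hsubY' i hiI hx')
            · have hkI : k ∈ I := (Finset.mem_insert.mp hk).resolve_left hkj
              simp only [hAb', if_neg hij, if_neg hkj]
              exact hAbdisj i hiI k hkI hik
      have hmem : insert j I ∈ P := by
        refine Finset.mem_filter.mpr ⟨Finset.mem_powerset.mpr ?_, hnew⟩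
        exact Finset.insert_subset hj hIJ
      have := hImax _ hmem
      rw [Finset.card_insert_of_notMem hjI] at this
      omega
  -- double counting: ∑_{j∈J} |H j ∩ Y| ≤ M * |Y|
  have hdc : ∑ j ∈ J, ((H j ∩ Y).card : ℕ) ≤ M * Y.card := by
    have heq : ∀ j, (H j ∩ Y).card = ∑ y ∈ Y, if y ∈ H j then 1 else 0 := by
      intro j
      rw [Finset.inter_comm, ← Finset.filter_mem_eq_inter, Finset.card_filter]
    calc ∑ j ∈ J, (H j ∩ Y).card
        = ∑ j ∈ J, ∑ y ∈ Y, if y ∈ H j then 1 else 0 := Finset.sum_congr rfl fun j _ => heq j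
      _ = ∑ y ∈ Y, ∑ j ∈ J, if y ∈ H j then 1 else 0 := Finset.sum_comm
      _ = ∑ y ∈ Y, (J.filter fun j => y ∈ H j).card :=
          Finset.sum_congr rfl fun y _ => (Finset.card_filter _ _).symm
      _ ≤ ∑ y ∈ Y, M := Finset.sum_le_sum fun y hy => hMbound y (hYX hy)
      _ = M * Y.card := by rw [Finset.sum_const, smul_eq_mul, mul_comm]
  have hdcR : ∑ j ∈ J, ((H j ∩ Y).card : ℝ) ≤ (M : ℝ) * Y.card := by
    exact_mod_cast hdc
  -- combine
  have hchain : (ε * ((1 - δ) * M * X.card) : ℝ) ≤ (M : ℝ) * Y.card := by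
    calc (ε * ((1 - δ) * M * X.card) : ℝ)
        ≤ ε * ∑ j ∈ J, ((H j).card : ℝ) := by
          exact mul_le_mul_of_nonneg_left hMsum hε0.le
      _ = ∑ j ∈ J, (ε * ((H j).card : ℝ)) := Finset.mul_sum _ _ _
      _ ≤ ∑ j ∈ J, ((H j ∩ Y).card : ℝ) := Finset.sum_le_sum key
      _ ≤ (M : ℝ) * Y.card := hdcR
  have hYcard : (ε * (1 - δ) * X.card : ℝ) ≤ (Y.card : ℝ) := by
    have := (mul_le_mul_iff_right₀ hMpos).mp (by nlinarith : (M:ℝ) * (ε * (1 - δ) * X.card) ≤ (M:ℝ) * Y.card)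
    linarith
  refine ⟨I, hIJ, ⟨Ab, hAbsub, hAbcard, hAbdisj⟩, ?_⟩
  unfold CoversFrac
  have hXY : X ∩ (I.biUnion H) = Y := by
    rw [← hY]; exact Finset.inter_eq_right.mpr hYX
  convert hYcard using 2
  rw [← hXY]
end

section
/- Let G be a group, let B ⊆ G be a nonempty finite set, let H ⊆ G be a nonempty finite set, let 0 ≤ β < 1 and 0 < ε₁ < 1, and let Q ⊆ B satisfy |Q| ≥ (1−β)|B| and H·x ⊆ B for every x ∈ Q. Then there exists a subset I ⊆ Q such that the family of right translates (H·x)_{x∈I} is ε₁-disjoint and |B ∩ ⋃_{x∈I} H·x| ≥ ε₁(1−β)|B|. -/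
open Pointwise Filter Topology

theorem translates_quasi_cover {G : Type*} [Group G] (B H : Finset G) (hB : B.Nonempty)
    (hH : H.Nonempty) (β ε₁ : ℝ) (hβ0 : 0 ≤ β) (hβ1 : β < 1) (hε0 : 0 < ε₁) (hε1 : ε₁ < 1)
    (Q : Finset G) (hQB : Q ⊆ B) (hQcard : ((1 - β) * B.card : ℝ) ≤ (Q.card : ℝ))
    (htile : ∀ x ∈ Q, rtrans H x ⊆ B) :
    ∃ I ⊆ Q, EpsDisjoint I (fun x => rtrans H x) ε₁ ∧
      CoversFrac I (fun x => rtrans H x) B (ε₁ * (1 - β)) := by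
  classical
  have hcard : ∀ x : G, (rtrans H x).card = H.card := by
    intro x
    simpa [rtrans] using Finset.card_image_of_injective H (mul_left_injective x)
  have hH0 : (0:ℝ) < H.card := by exact_mod_cast Finset.card_pos.mpr hH
  set F := Q.powerset.filter (fun I => EpsDisjoint I (fun x => rtrans H x) ε₁) with hF
  have hempty : (∅ : Finset G) ∈ F := by
    simp only [hF, Finset.mem_filter, Finset.mem_powerset]
    exact ⟨Finset.empty_subset _, ⟨fun _ => ∅, by simp, by simp, by simp⟩⟩
  obtain ⟨I, hIF, hImax⟩ := Finset.exists_max_image F Finset.card ⟨∅, hempty⟩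
  rw [hF, Finset.mem_filter, Finset.mem_powerset] at hIF
  obtain ⟨hIQ, hED⟩ := hIF
  obtain ⟨Ab, hAb1, hAb2, hAb3⟩ := hED
  set U := I.biUnion (fun x => rtrans H x) with hU
  have hUB : U ⊆ B := by
    intro u hu
    rw [hU, Finset.mem_biUnion] at hu
    obtain ⟨x, hx, hux⟩ := hu
    exact htile x (hIQ hx) hux
  have hAbU : ∀ i ∈ I, Ab i ⊆ U := fun i hi =>
    (hAb1 i hi).trans (Finset.subset_biUnion_of_mem _ hi)
  -- key claim: every translate from Q meets U in at least ε₁ |H| points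
  have hkey : ∀ x ∈ Q, (ε₁ * H.card : ℝ) ≤ ((rtrans H x ∩ U).card : ℝ) := by
    intro x hxQ
    by_cases hxI : x ∈ I
    · have heq : rtrans H x ∩ U = rtrans H x := Finset.inter_eq_left.mpr
        (Finset.subset_biUnion_of_mem _ hxI)
      rw [heq, hcard]
      nlinarith
    · by_contra hlt
      push_neg at hlt
      set Ab' := Function.update Ab x (rtrans H x \ U) with hAb'
      have hnew : EpsDisjoint (insert x I) (fun x => rtrans H x) ε₁ := by
        refine ⟨Ab', ?_, ?_, ?_⟩
        · intro i hi
          rcases Finset.mem_insert.mp hi with rfl | hi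
          · rw [hAb', Function.update_self]
            exact Finset.sdiff_subset
          · rw [hAb', Function.update_of_ne (fun (h : _ = x) => hxI (h ▸ hi))]
            exact hAb1 i hi
        · intro i hi
          rcases Finset.mem_insert.mp hi with rfl | hi
          · rw [hAb', Function.update_self]
            have h1 : (rtrans H i \ U).card + (rtrans H i ∩ U).card = (rtrans H i).card :=
              Finset.card_sdiff_add_card_inter _ _
            have h1' : ((rtrans H i \ U).card : ℝ) + ((rtrans H i ∩ U).card : ℝ)
                = ((rtrans H i).card : ℝ) := by exact_mod_cast h1
            have h2 : ((rtrans H i).card : ℝ) = (H.card : ℝ) := by rw [hcard]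
            nlinarith
          · rw [hAb', Function.update_of_ne (fun (h : _ = x) => hxI (h ▸ hi))]
            exact hAb2 i hi
        · intro i hi j hj hij
          rcases Finset.mem_insert.mp hi with h1 | h1
          · rcases Finset.mem_insert.mp hj with h2 | h2
            · exact absurd (h1.trans h2.symm) hij
            · have hne : j ≠ x := fun h => hxI (h ▸ h2)
              subst h1
              rw [hAb', Function.update_self, Function.update_of_ne hne]
              exact Finset.sdiff_disjoint.mono_right (hAbU j h2)
          · rcases Finset.mem_insert.mp hj with h2 | h2
            · have hne : i ≠ x := fun h => hxI (h ▸ h1)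
              subst h2
              rw [hAb', Function.update_self, Function.update_of_ne hne]
              exact (Finset.sdiff_disjoint.mono_right (hAbU i h1)).symm
            · have hnei : i ≠ x := fun h => hxI (h ▸ h1)
              have hnej : j ≠ x := fun h => hxI (h ▸ h2)
              rw [hAb', Function.update_of_ne hnei, Function.update_of_ne hnej]
              exact hAb3 i h1 j h2 hij
      have hmem : insert x I ∈ F := by
        simp only [hF, Finset.mem_filter, Finset.mem_powerset]
        exact ⟨Finset.insert_subset hxQ hIQ, hnew⟩
      have hle := hImax _ hmem
      rw [Finset.card_insert_of_notMem hxI] at hle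
      omega
  -- double counting
  have hsum1 : (ε₁ * H.card * Q.card : ℝ) ≤ ∑ x ∈ Q, ((rtrans H x ∩ U).card : ℝ) := by
    calc (ε₁ * H.card * Q.card : ℝ) = ∑ _x ∈ Q, (ε₁ * H.card : ℝ) := by
          rw [Finset.sum_const, nsmul_eq_mul]; ring
      _ ≤ _ := Finset.sum_le_sum hkey
  have hsum2 : ∑ x ∈ Q, (rtrans H x ∩ U).card ≤ U.card * H.card := by
    have h1 : ∀ x : G, (rtrans H x ∩ U).card
        = ∑ u ∈ U, if u ∈ rtrans H x then 1 else 0 := by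
      intro x
      rw [Finset.inter_comm, ← Finset.filter_mem_eq_inter]
      exact Finset.card_filter _ _
    calc ∑ x ∈ Q, (rtrans H x ∩ U).card
        = ∑ x ∈ Q, ∑ u ∈ U, if u ∈ rtrans H x then 1 else 0 := by
          exact Finset.sum_congr rfl fun x _ => h1 x
      _ = ∑ u ∈ U, ∑ x ∈ Q, if u ∈ rtrans H x then 1 else 0 := Finset.sum_comm
      _ = ∑ u ∈ U, (Q.filter fun x => u ∈ rtrans H x).card := by
          exact Finset.sum_congr rfl fun u _ => (Finset.card_filter _ _).symm
      _ ≤ ∑ _u ∈ U, H.card := by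
          refine Finset.sum_le_sum fun u _ => ?_
          have hsub : (Q.filter fun x => u ∈ rtrans H x) ⊆ H.image (fun h => h⁻¹ * u) := by
            intro x hx
            rw [Finset.mem_filter] at hx
            have := hx.2
            simp only [rtrans, Finset.mem_image] at this
            obtain ⟨h, hh, hhx⟩ := this
            refine Finset.mem_image.mpr ⟨h, hh, ?_⟩
            rw [← hhx]
            group
          exact (Finset.card_le_card hsub).trans Finset.card_image_le
      _ = U.card * H.card := by rw [Finset.sum_const, smul_eq_mul]
  have hsum2' : (∑ x ∈ Q, ((rtrans H x ∩ U).card : ℝ)) ≤ (U.card : ℝ) * H.card := by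
    exact_mod_cast hsum2
  have hUQ : (ε₁ * Q.card : ℝ) ≤ (U.card : ℝ) := by nlinarith
  refine ⟨I, hIQ, ⟨Ab, hAb1, hAb2, hAb3⟩, ?_⟩
  show (ε₁ * (1 - β) * B.card : ℝ) ≤ _
  have hBU : B ∩ U = U := Finset.inter_eq_right.mpr hUB
  have : ((B ∩ I.biUnion fun x => rtrans H x).card : ℝ) = (U.card : ℝ) := by
    rw [← hU]
    exact_mod_cast congrArg Finset.card hBU
  rw [this]
  nlinarith
end

section
/- Let G be an infinite group generated by a finite symmetric set S, let (F_n) be a Følner exhaustion of G, and let (α_k) be a sequence of positive reals. Then there exist a sequence of natural numbers (s_k) with s_1 ≥ 1 and s_{k+1} ≥ 10·s_k for all k, and indices n_1 < n_2 < n_3 < ⋯ such that 1 ∈ F_{n_1} ⊆ B_{s_1} ⊆ F_{n_2} ⊆ B_{s_2} ⊆ F_{n_3} ⊆ ⋯ (i.e. F_{n_k} ⊆ B_{s_k} ⊆ F_{n_{k+1}} for all k) and for every i, |B_{100·s_i}(F_{n_{i+1}})| < (1 + α_i)·|F_{n_{i+1}}| (that is, F_{n_{i+1}} is of type (100·s_i,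 α_i)). -/
open Pointwise Filter Topology

section MyAux
variable {G : Type*} [Group G]

lemma my_one_mem_wball (S : Finset G) (k : ℕ) : (1:G) ∈ wball S k := by
  letI := Classical.decEq G
  exact Finset.one_mem_pow (Finset.mem_insert_self 1 S)

lemma my_wball_mono (S : Finset G) {a b : ℕ} (h : a ≤ b) : wball S a ⊆ wball S b := by
  letI := Classical.decEq G
  exact Finset.pow_subset_pow_right (Finset.mem_insert_self 1 S) h

lemma my_wball_mul_mem (S : Finset G) {a b : ℕ} {x y : G} (hx : x ∈ wball S a)
    (hy : y ∈ wball S b) : x * y ∈ wball S (a + b) := by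
  letI := Classical.decEq G
  rw [wball, pow_add]
  exact Finset.mul_mem_mul hx hy

lemma my_wball_inv (S : Finset G) (hsymm : ∀ s ∈ S, s⁻¹ ∈ S) (k : ℕ) {g : G}
    (hg : g ∈ wball S k) : g⁻¹ ∈ wball S k := by
  letI := Classical.decEq G
  have hT : (insert (1:G) S)⁻¹ = insert (1:G) S := by
    ext x
    simp only [Finset.mem_inv', Finset.mem_insert, inv_eq_one]
    constructor
    · rintro (h | h)
      · exact Or.inl h
      · exact Or.inr (by simpa using hsymm _ h)
    · rintro (h | h)
      · exact Or.inl h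
      · exact Or.inr (hsymm _ h)
  have : g⁻¹ ∈ (insert (1:G) S)⁻¹ ^ k := by
    rw [inv_pow]
    simpa using (show g ∈ insert (1:G) S ^ k from hg)
  rwa [hT] at this

lemma my_exists_wball (S : Finset G) (hS : IsSymmGen S) (T : Finset G) :
    ∃ m, T ⊆ wball S m := by
  letI := Classical.decEq G
  have key : ∀ g : G, ∃ m, g ∈ wball S m := by
    intro g
    have hg : g ∈ Subgroup.closure (S : Set G) := hS.2 ▸ Subgroup.mem_top g
    induction hg using Subgroup.closure_induction with
    | mem x hx => exact ⟨1, by simpa [wball] using Finset.mem_insert_of_mem hx⟩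
    | one => exact ⟨0, my_one_mem_wball S 0⟩
    | mul x y _ _ hx hy =>
      obtain ⟨a, ha⟩ := hx
      obtain ⟨b, hb⟩ := hy
      exact ⟨a + b, my_wball_mul_mem S ha hb⟩
    | inv x _ hx =>
      obtain ⟨a, ha⟩ := hx
      exact ⟨a, my_wball_inv S hS.1 a ha⟩
  choose m hm using key
  refine ⟨T.sup m, fun g hg => my_wball_mono S (Finset.le_sup hg) (hm g)⟩

lemma my_wnbhd_subset (S : Finset G) (K : ℕ) (F : Finset G) :
    letI := Classical.decEq G
    wnbhd S K F ⊆ F ∪ (wball S K * wbdry S F) := by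
  letI := Classical.decEq G
  induction K with
  | zero =>
    intro g hg
    rw [wnbhd] at hg
    have : wball S 0 = {1} := by rw [wball]; rfl
    rw [this] at hg
    obtain ⟨a, ha, b, hb, rfl⟩ := Finset.mem_mul.1 hg
    simp only [Finset.mem_singleton] at ha
    subst ha
    simpa using Finset.mem_union_left _ hb
  | succ K ih =>
    intro g hg
    rw [wnbhd, wball, pow_succ'] at hg
    rw [mul_assoc] at hg
    obtain ⟨t, ht, h, hh, rfl⟩ := Finset.mem_mul.1 hg
    have hh' : h ∈ F ∪ (wball S K * wbdry S F) := ih hh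
    rcases Finset.mem_union.1 hh' with hhF | hhB
    · -- h ∈ F
      rcases Finset.mem_insert.1 ht with rfl | htS
      · exact Finset.mem_union_left _ (by simpa using hhF)
      · by_cases hgF : t * h ∈ F
        · exact Finset.mem_union_left _ hgF
        · have hbd : h ∈ wbdry S F := Finset.mem_filter.2 ⟨hhF, ⟨t, htS, hgF⟩⟩
          refine Finset.mem_union_right _ ?_
          have ht1 : t ∈ wball S (K+1) :=
            my_wball_mono S (Nat.le_add_left 1 K) (by simpa [wball] using ht)
          exact Finset.mul_mem_mul ht1 hbd
    · -- h ∈ wball S K * wbdry S F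
      obtain ⟨b, hb, p, hp, rfl⟩ := Finset.mem_mul.1 hhB
      refine Finset.mem_union_right _ ?_
      have : t * b ∈ wball S (K+1) := by
        rw [wball, pow_succ']
        exact Finset.mul_mem_mul ht hb
      rw [← mul_assoc]
      exact Finset.mul_mem_mul this hp

lemma my_card_wnbhd (S : Finset G) (K : ℕ) (F : Finset G) :
    ((wnbhd S K F).card : ℝ) ≤ F.card + (wball S K).card * (wbdry S F).card := by
  letI := Classical.decEq G
  have h1 := Finset.card_le_card (my_wnbhd_subset S K F)
  have h2 := Finset.card_union_le F (wball S K * wbdry S F)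
  have h3 := Finset.card_mul_le (s := wball S K) (t := wbdry S F)
  have : (wnbhd S K F).card ≤ F.card + (wball S K).card * (wbdry S F).card := by omega
  exact_mod_cast this

end MyAux

theorem good_subsequence_exists {G : Type*} [Group G] [Infinite G] (S : Finset G)
    (hS : IsSymmGen S) (F : ℕ → Finset G) (hF : IsFolnerExhaustion S F)
    (α : ℕ → ℝ) (hα : ∀ k, 0 < α k) :
    ∃ (s : ℕ → ℕ) (n : ℕ → ℕ), 1 ≤ s 0 ∧ (∀ k, 10 * s k ≤ s (k + 1)) ∧ StrictMono n ∧
      (1 : G) ∈ F (n 0) ∧ (∀ k, F (n k) ⊆ wball S (s k) ∧ wball S (s k) ⊆ F (n (k + 1))) ∧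
      ∀ i, ((wnbhd S (100 * s i) (F (n (i + 1)))).card : ℝ)
        < (1 + α i) * ((F (n (i + 1))).card : ℝ) := by
  classical
  obtain ⟨hsymm, hgen⟩ := hS
  obtain ⟨h1F, hmono, hexh, htend⟩ := hF
  have hFne : ∀ n, 0 < (F n).card := fun n =>
    Finset.card_pos.2 ⟨1, hmono (Nat.zero_le n) h1F⟩
  have hcover : ∀ T : Finset G, ∃ N, ∀ n, N ≤ n → T ⊆ F n := by
    intro T
    choose u hu using hexh
    exact ⟨T.sup u, fun n hn g hg => hmono (le_trans (Finset.le_sup hg) hn) (hu g)⟩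
  have htype : ∀ (K : ℕ) (a : ℝ), 0 < a → ∃ N, ∀ n, N ≤ n →
      ((wnbhd S K (F n)).card : ℝ) < (1 + a) * ((F n).card : ℝ) := by
    intro K a ha
    have hBpos : (0:ℝ) < ((wball S K).card : ℝ) := by
      exact_mod_cast Finset.card_pos.2 ⟨1, my_one_mem_wball S K⟩
    have hε : 0 < a / ((wball S K).card : ℝ) := div_pos ha hBpos
    have hev : ∀ᶠ n in atTop,
        ((wbdry S (F n)).card : ℝ) / ((F n).card : ℝ) < a / ((wball S K).card : ℝ) :=
      htend.eventually (gt_mem_nhds hε)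
    obtain ⟨N, hN⟩ := eventually_atTop.1 hev
    refine ⟨N, fun n hn => ?_⟩
    have hFpos : (0:ℝ) < ((F n).card : ℝ) := by exact_mod_cast hFne n
    have h1 : ((wbdry S (F n)).card : ℝ) * ((wball S K).card : ℝ)
        < a * ((F n).card : ℝ) := (div_lt_div_iff₀ hFpos hBpos).1 (hN n hn)
    have h2 := my_card_wnbhd S K (F n)
    nlinarith [h1, h2]
  have hstep : ∀ (i : ℕ) (p : ℕ × ℕ), ∃ q : ℕ × ℕ,
      p.2 < q.2 ∧ wball S p.1 ⊆ F q.2 ∧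
      ((wnbhd S (100 * p.1) (F q.2)).card : ℝ) < (1 + α i) * ((F q.2).card : ℝ) ∧
      10 * p.1 ≤ q.1 ∧ F q.2 ⊆ wball S q.1 := by
    intro i p
    obtain ⟨N1, hN1⟩ := hcover (wball S p.1)
    obtain ⟨N2, hN2⟩ := htype (100 * p.1) (α i) (hα i)
    set N := max (max N1 N2) (p.2 + 1) with hNdef
    obtain ⟨m, hm⟩ := my_exists_wball S ⟨hsymm, hgen⟩ (F N)
    refine ⟨(max m (10 * p.1), N), ?_, ?_, ?_, ?_, ?_⟩
    · exact lt_of_lt_of_le (Nat.lt_succ_self _) (le_max_right _ _)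
    · exact hN1 N (le_trans (le_max_left _ _) (le_max_left _ _))
    · exact hN2 N (le_trans (le_max_right _ _) (le_max_left _ _))
    · exact le_max_right _ _
    · exact hm.trans (my_wball_mono S (le_max_left _ _))
  choose step hs1 hs2 hs3 hs4 hs5 using hstep
  obtain ⟨m0, hm0⟩ := my_exists_wball S ⟨hsymm, hgen⟩ (F 0)
  let f : ℕ → ℕ × ℕ := fun k => Nat.rec (max m0 1, 0) (fun i p => step i p) k
  refine ⟨fun k => (f k).1, fun k => (f k).2, ?_, ?_, ?_, ?_, ?_, ?_⟩
  · exact le_max_right _ _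
  · exact fun k => hs4 k (f k)
  · exact strictMono_nat_of_lt_succ fun k => hs1 k (f k)
  · exact h1F
  · intro k
    refine ⟨?_, hs2 k (f k)⟩
    cases k with
    | zero => exact hm0.trans (my_wball_mono S (le_max_left _ _))
    | succ j => exact hs5 j (f j)
  · exact fun i => hs3 i (f i)
end
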